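/- For every s ∈ ℝ, the Clausen function C_s is monotone in x on the interval (0, π). More precisely: if s > 0 then C_s is strictly decreasing on (0, π); and if s ≤ 0, then for every x ∈ (0, π) the derivative (d/dx) C_s(x) = −S_{s−1}(x) has the same sign as −sin(πs/2) (so C_s is decreasing on (0, π) when sin(πs/2) > 0, increasing when sin(πs/2) < 0, and constant when sin(πs/2) = 0). -/

import Mathlib

open scoped Real
open Set

/-- The Clausen function `C_s(x) = Re (Li_s (e^{ix}))`, realized via the periodic
(cosine) zeta function, which is automatically `2π`-periodic and even in `x`. -/
noncomputable def Cl (s x : ℝ) : ℝ :=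
  (HurwitzZeta.cosZeta (↑(x / (2 * π)) : UnitAddCircle) (s : ℂ)).re

/-- The odd Clausen function `S_s(x) = Im (Li_s (e^{ix}))`. -/
noncomputable def Sl (s x : ℝ) : ℝ :=
  (HurwitzZeta.sinZeta (↑(x / (2 * π)) : UnitAddCircle) (s : ℂ)).re

namespace ClausenAux

open Complex HurwitzZeta

noncomputable def et (σ a : ℝ) (n : ℕ) : ℝ := ((n + a) ^ (-σ) + (n + 1 - a) ^ (-σ)) / 2
noncomputable def ot (σ a : ℝ) (n : ℕ) : ℝ := ((n + a) ^ (-σ) - (n + 1 - a) ^ (-σ)) / 2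
noncomputable def E (σ a : ℝ) : ℝ := ∑' n, et σ a n
noncomputable def O (σ a : ℝ) : ℝ := ∑' n, ot σ a n

lemma cast_term {x : ℝ} (hx : 0 < x) (σ : ℝ) :
    1 / ((x : ℂ)) ^ (σ : ℂ) = ((x ^ (-σ) : ℝ) : ℂ) := by
  rw [(Complex.ofReal_cpow hx.le σ).symm, Real.rpow_neg hx.le]
  push_cast
  ring

lemma hasSum_et {a σ : ℝ} (ha : a ∈ Ioo (0:ℝ) 1) (hσ : 1 < σ) :
    HasSum (fun n => ((et σ a n : ℝ) : ℂ)) (hurwitzZetaEven ↑a ↑σ) := by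
  have h := hasSum_nat_hurwitzZetaEven_of_mem_Icc (mem_Icc_of_Ioo ha)
    (by rwa [Complex.ofReal_re] : 1 < (σ : ℂ).re)
  refine h.congr_fun fun n => ?_
  have h1 : (0:ℝ) < n + a := by have := ha.1; positivity
  have h2 : (0:ℝ) < n + 1 - a := by have := ha.2; nlinarith [Nat.cast_nonneg (α := ℝ) n]
  have e1 : ((n : ℂ) + a) = ((n + a : ℝ) : ℂ) := by push_cast; ring
  have e2 : ((n : ℂ) + 1 - a) = ((n + 1 - a : ℝ) : ℂ) := by push_cast; ring
  rw [e1, e2, cast_term h1, cast_term h2, et]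
  push_cast
  ring

lemma hasSum_ot {a σ : ℝ} (ha : a ∈ Ioo (0:ℝ) 1) (hσ : 1 < σ) :
    HasSum (fun n => ((ot σ a n : ℝ) : ℂ)) (hurwitzZetaOdd ↑a ↑σ) := by
  have h := hasSum_nat_hurwitzZetaOdd_of_mem_Icc (mem_Icc_of_Ioo ha)
    (by rwa [Complex.ofReal_re] : 1 < (σ : ℂ).re)
  refine h.congr_fun fun n => ?_
  have h1 : (0:ℝ) < n + a := by have := ha.1; positivity
  have h2 : (0:ℝ) < n + 1 - a := by have := ha.2; nlinarith [Nat.cast_nonneg (α := ℝ) n]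
  have e1 : ((n : ℂ) + a) = ((n + a : ℝ) : ℂ) := by push_cast; ring
  have e2 : ((n : ℂ) + 1 - a) = ((n + 1 - a : ℝ) : ℂ) := by push_cast; ring
  rw [e1, e2, cast_term h1, cast_term h2, ot]
  push_cast
  ring

lemma even_eq {a σ : ℝ} (ha : a ∈ Ioo (0:ℝ) 1) (hσ : 1 < σ) :
    hurwitzZetaEven ↑a ↑σ = ((E σ a : ℝ) : ℂ) ∧ HasSum (et σ a) (E σ a) := by
  have h := hasSum_et ha hσ
  have hs : Summable (et σ a) := Complex.summable_ofReal.mp h.summable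
  have h2 : HasSum (et σ a) (E σ a) := hs.hasSum
  exact ⟨h.unique (Complex.hasSum_ofReal.mpr h2), h2⟩

lemma odd_eq {a σ : ℝ} (ha : a ∈ Ioo (0:ℝ) 1) (hσ : 1 < σ) :
    hurwitzZetaOdd ↑a ↑σ = ((O σ a : ℝ) : ℂ) ∧ HasSum (ot σ a) (O σ a) := by
  have h := hasSum_ot ha hσ
  have hs : Summable (ot σ a) := Complex.summable_ofReal.mp h.summable
  have h2 : HasSum (ot σ a) (O σ a) := hs.hasSum
  exact ⟨h.unique (Complex.hasSum_ofReal.mpr h2), h2⟩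

lemma O_pos {a σ : ℝ} (ha : a ∈ Ioo (0:ℝ) (1/2)) (hσ : 1 < σ) : 0 < O σ a := by
  have ha' : a ∈ Ioo (0:ℝ) 1 := ⟨ha.1, by linarith [ha.2]⟩
  have hsum := (odd_eq ha' hσ).2
  have hnn : ∀ n, 0 ≤ ot σ a n := by
    intro n
    have h1 : (0:ℝ) < n + a := by have := ha.1; positivity
    have hle : (n:ℝ) + a ≤ n + 1 - a := by linarith [ha.2]
    have := Real.rpow_le_rpow_of_nonpos h1 hle (by linarith : -σ ≤ 0)
    rw [ot]
    linarith
  refine Summable.tsum_pos hsum.summable hnn 0 ?_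
  have key := Real.rpow_lt_rpow_of_neg ha.1 (show a < 1 - a by linarith [ha.2])
    (by linarith : -σ < 0)
  rw [ot]
  simp only [Nat.cast_zero, zero_add]
  linarith

lemma summable_shift {c : ℝ} (hc : 0 < c) {p : ℝ} (hp : 1 < p) :
    Summable (fun n : ℕ => ((n:ℝ) + c) ^ (-p)) := by
  rw [← summable_nat_add_iff 1]
  have hbase : Summable (fun n : ℕ => ((n + 1 : ℕ) : ℝ) ^ (-p)) :=
    (summable_nat_add_iff (f := fun n : ℕ => ((n:ℕ):ℝ) ^ (-p)) 1).mpr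
      (Real.summable_nat_rpow.mpr (by linarith))
  refine hbase.of_nonneg_of_le (fun n => ?_) (fun n => ?_)
  · positivity
  · have h1 : (0:ℝ) < ((n + 1 : ℕ) : ℝ) := by positivity
    have h2 : ((n + 1 : ℕ) : ℝ) ≤ ((n + 1 : ℕ) : ℝ) + c := by linarith
    have := Real.rpow_le_rpow_of_nonpos h1 h2 (by linarith : -p ≤ 0)
    convert this using 3

lemma hasDerivAt_et {σ : ℝ} (n : ℕ) {y : ℝ} (hy : y ∈ Ioo (0:ℝ) 1) :
    HasDerivAt (fun z => et σ z n) (-σ * ot (σ + 1) y n) y := by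
  have h1 : (0:ℝ) < n + y := by have := hy.1; positivity
  have h2 : (0:ℝ) < n + 1 - y := by have := hy.2; nlinarith [Nat.cast_nonneg (α := ℝ) n]
  have hA : HasDerivAt (fun z : ℝ => ((n:ℝ) + z) ^ (-σ)) (-σ * ((n:ℝ) + y) ^ (-σ - 1) * 1) y :=
    (Real.hasDerivAt_rpow_const (Or.inl h1.ne')).comp y ((hasDerivAt_id y).const_add (n:ℝ))
  have hB : HasDerivAt (fun z : ℝ => ((n:ℝ) + 1 - z) ^ (-σ))
      (-σ * ((n:ℝ) + 1 - y) ^ (-σ - 1) * (-1)) y := by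
    have hsub : HasDerivAt (fun z : ℝ => (n:ℝ) + 1 - z) (-1) y := by
      simpa using (hasDerivAt_id y).const_sub ((n:ℝ) + 1)
    exact (Real.hasDerivAt_rpow_const (Or.inl h2.ne')).comp y hsub
  have := (hA.add hB).div_const 2
  refine this.congr_deriv ?_
  rw [ot]
  have e1 : -(σ + 1) = -σ - 1 := by ring
  rw [e1]
  ring


lemma hasDerivAt_E {σ : ℝ} (hσ : 1 < σ) {a : ℝ} (ha : a ∈ Ioo (0:ℝ) 1) :
    HasDerivAt (E σ) (-σ * O (σ + 1) a) a := by
  obtain ⟨ha0, ha1⟩ := ha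
  have hsub : ∀ y ∈ Ioo (a/2) ((1+a)/2), y ∈ Ioo (0:ℝ) 1 :=
    fun y hy => ⟨by linarith [hy.1], by linarith [hy.2]⟩
  set u : ℕ → ℝ :=
    fun n => σ * (((n:ℝ) + a/2) ^ (-(σ+1)) + ((n:ℝ) + (1-a)/2) ^ (-(σ+1))) / 2 with hu_def
  have hu : Summable u := by
    apply Summable.div_const
    apply Summable.mul_left
    exact (summable_shift (by linarith) (by linarith)).add
      (summable_shift (by linarith) (by linarith))
  have hbound : ∀ (n : ℕ), ∀ y ∈ Ioo (a/2) ((1+a)/2), ‖-σ * ot (σ+1) y n‖ ≤ u n := by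
    intro n y hy
    obtain ⟨hy0, hy1⟩ := hsub y hy
    have hp1 : (0:ℝ) < (n:ℝ) + a/2 := by positivity
    have hp2 : (0:ℝ) < (n:ℝ) + (1-a)/2 := by
      have : (0:ℝ) < (1-a)/2 := by linarith
      positivity
    have hpy1 : (0:ℝ) < (n:ℝ) + y := by positivity
    have hpy2 : (0:ℝ) < (n:ℝ) + 1 - y := by nlinarith [Nat.cast_nonneg (α := ℝ) n]
    have hexp : -(σ+1) ≤ 0 := by linarith
    have hA := Real.rpow_le_rpow_of_nonpos hp1 (by linarith [hy.1] : (n:ℝ) + a/2 ≤ n + y) hexp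
    have hB := Real.rpow_le_rpow_of_nonpos hp2
      (by linarith [hy.2] : (n:ℝ) + (1-a)/2 ≤ n + 1 - y) hexp
    have hAnn : (0:ℝ) ≤ ((n:ℝ) + y) ^ (-(σ+1)) := Real.rpow_nonneg hpy1.le _
    have hBnn : (0:ℝ) ≤ ((n:ℝ) + 1 - y) ^ (-(σ+1)) := Real.rpow_nonneg hpy2.le _
    have habs : |((n:ℝ) + y) ^ (-(σ+1)) - ((n:ℝ) + 1 - y) ^ (-(σ+1))|
        ≤ ((n:ℝ) + a/2) ^ (-(σ+1)) + ((n:ℝ) + (1-a)/2) ^ (-(σ+1)) :=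
      abs_le.mpr ⟨by linarith, by linarith⟩
    rw [Real.norm_eq_abs, ot, hu_def]
    rw [show -σ * ((((n:ℝ) + y) ^ (-(σ+1)) - ((n:ℝ) + 1 - y) ^ (-(σ+1))) / 2)
        = -(σ * ((((n:ℝ) + y) ^ (-(σ+1)) - ((n:ℝ) + 1 - y) ^ (-(σ+1)))) / 2) by ring,
      abs_neg, abs_div, abs_mul, abs_of_pos (by linarith : (0:ℝ) < σ)]
    have h2 : |(2:ℝ)| = 2 := by norm_num
    rw [h2]
    have h3 := mul_le_mul_of_nonneg_left habs (by linarith : (0:ℝ) ≤ σ)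
    linarith
  have hg0 : Summable (fun n => et σ a n) := (even_eq ⟨ha0, ha1⟩ hσ).2.summable
  have key := hasDerivAt_tsum_of_isPreconnected (u := u)
    (g := fun (n : ℕ) (z : ℝ) => et σ z n) (g' := fun (n : ℕ) (y : ℝ) => -σ * ot (σ+1) y n)
    hu isOpen_Ioo (convex_Ioo _ _).isPreconnected
    (fun n y hy => hasDerivAt_et n (hsub y hy)) hbound
    (⟨by linarith, by linarith⟩ : a ∈ Ioo (a/2) ((1+a)/2)) hg0
    (⟨by linarith, by linarith⟩ : a ∈ Ioo (a/2) ((1+a)/2))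
  have htsum : (∑' n, -σ * ot (σ+1) a n) = -σ * O (σ+1) a := by
    rw [O]; exact tsum_mul_left
  rw [htsum] at key
  exact key


lemma cosZeta_fe {s a : ℝ} (hs : s < 0) (ha : a ∈ Ioo (0:ℝ) 1) :
    cosZeta ↑a ↑s =
      ((2 * (2*π) ^ (s-1) * Real.Gamma (1-s) * Real.sin (π*s/2) * E (1-s) a : ℝ) : ℂ) := by
  have hσ : 1 < 1 - s := by linarith
  have hne : ∀ n : ℕ, ((1 - s : ℝ) : ℂ) ≠ 1 - (n : ℂ) := by
    intro n h
    have := congrArg Complex.re h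
    simp only [Complex.ofReal_re, Complex.sub_re, Complex.one_re, Complex.natCast_re] at this
    have hn : (0:ℝ) ≤ (n:ℝ) := Nat.cast_nonneg n
    linarith
  have hfe := cosZeta_one_sub (↑a : UnitAddCircle) hne
  have harg : 1 - (((1 - s : ℝ)) : ℂ) = ((s : ℝ) : ℂ) := by push_cast; ring
  rw [harg] at hfe
  rw [hfe]
  have h2π : (2 * (π:ℂ)) = (((2 * π : ℝ)) : ℂ) := by push_cast; ring
  have hpow : (2 * (π:ℂ)) ^ (-(((1 - s : ℝ)) : ℂ)) = (((2*π) ^ (s-1) : ℝ) : ℂ) := by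
    rw [h2π, show (-(((1 - s : ℝ)) : ℂ)) = (((s - 1 : ℝ)) : ℂ) by push_cast; ring]
    exact (Complex.ofReal_cpow (by positivity) _).symm
  have hG : Complex.Gamma (((1 - s : ℝ)) : ℂ) = ((Real.Gamma (1 - s) : ℝ) : ℂ) :=
    Complex.Gamma_ofReal _
  have hcos : Complex.cos ((π:ℂ) * (((1 - s : ℝ)) : ℂ) / 2) = ((Real.sin (π*s/2) : ℝ) : ℂ) := by
    rw [show ((π:ℂ) * (((1 - s : ℝ)) : ℂ) / 2) = (((π * (1-s) / 2 : ℝ)) : ℂ) by push_cast; ring,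
      ← Complex.ofReal_cos, show π * (1-s) / 2 = π/2 - π*s/2 by ring, Real.cos_pi_div_two_sub]
  rw [hpow, hG, hcos, (even_eq ha hσ).1]
  push_cast
  ring

lemma sinZeta_fe {s a : ℝ} (hs : s ≤ 0) (ha : a ∈ Ioo (0:ℝ) 1) :
    sinZeta ↑a ↑(s-1) =
      ((2 * (2*π) ^ (s-2) * Real.Gamma (2-s) * Real.sin (π*s/2) * O (2-s) a : ℝ) : ℂ) := by
  have hσ : 1 < 2 - s := by linarith
  have hne : ∀ n : ℕ, ((2 - s : ℝ) : ℂ) ≠ -(n : ℂ) := by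
    intro n h
    have := congrArg Complex.re h
    simp only [Complex.ofReal_re, Complex.neg_re, Complex.natCast_re] at this
    have hn : (0:ℝ) ≤ (n:ℝ) := Nat.cast_nonneg n
    linarith
  have hfe := sinZeta_one_sub (↑a : UnitAddCircle) hne
  have harg : 1 - (((2 - s : ℝ)) : ℂ) = ((s - 1 : ℝ) : ℂ) := by push_cast; ring
  rw [harg] at hfe
  rw [hfe]
  have h2π : (2 * (π:ℂ)) = (((2 * π : ℝ)) : ℂ) := by push_cast; ring
  have hpow : (2 * (π:ℂ)) ^ (-(((2 - s : ℝ)) : ℂ)) = (((2*π) ^ (s-2) : ℝ) : ℂ) := by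
    rw [h2π, show (-(((2 - s : ℝ)) : ℂ)) = (((s - 2 : ℝ)) : ℂ) by push_cast; ring]
    exact (Complex.ofReal_cpow (by positivity) _).symm
  have hG : Complex.Gamma (((2 - s : ℝ)) : ℂ) = ((Real.Gamma (2 - s) : ℝ) : ℂ) :=
    Complex.Gamma_ofReal _
  have hsin : Complex.sin ((π:ℂ) * (((2 - s : ℝ)) : ℂ) / 2) = ((Real.sin (π*s/2) : ℝ) : ℂ) := by
    rw [show ((π:ℂ) * (((2 - s : ℝ)) : ℂ) / 2) = (((π * (2-s) / 2 : ℝ)) : ℂ) by push_cast; ring,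
      ← Complex.ofReal_sin, show π * (2-s) / 2 = π - π*s/2 by ring, Real.sin_pi_sub]
  rw [hpow, hG, hsin, (odd_eq ha hσ).1]
  push_cast
  ring


lemma mem_a {x : ℝ} (hx : x ∈ Ioo (0:ℝ) π) : x / (2*π) ∈ Ioo (0:ℝ) (1/2) := by
  have hπ : 0 < π := Real.pi_pos
  have hx1 := hx.1
  constructor
  · positivity
  · rw [div_lt_iff₀ (by positivity)]
    linarith [hx.2]

lemma mem_a' {x : ℝ} (hx : x ∈ Ioo (0:ℝ) π) : x / (2*π) ∈ Ioo (0:ℝ) 1 :=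
  ⟨(mem_a hx).1, by linarith [(mem_a hx).2]⟩

lemma Sl_eq {s x : ℝ} (hs : s ≤ 0) (hx : x ∈ Ioo (0:ℝ) π) :
    Sl (s-1) x = 2 * (2*π) ^ (s-2) * Real.Gamma (2-s) * Real.sin (π*s/2) * O (2-s) (x/(2*π)) := by
  rw [Sl, sinZeta_fe hs (mem_a' hx), Complex.ofReal_re]

lemma Cl_eq {s x : ℝ} (hs : s < 0) (hx : x ∈ Ioo (0:ℝ) π) :
    Cl s x = 2 * (2*π) ^ (s-1) * Real.Gamma (1-s) * Real.sin (π*s/2) * E (1-s) (x/(2*π)) := by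
  rw [Cl, cosZeta_fe hs (mem_a' hx), Complex.ofReal_re]

lemma Sl_zero {x : ℝ} : Sl ((0:ℝ)-1) x = 0 := by
  have h : (((0:ℝ)-1 : ℝ) : ℂ) = -2*((0:ℕ):ℂ)-1 := by push_cast; ring
  rw [Sl, h, sinZeta_neg_two_mul_nat_sub_one, Complex.zero_re]

lemma Cl_zero : Cl 0 = fun _ : ℝ => ((-1:ℝ)/2) := by
  funext y
  rw [Cl, Complex.ofReal_zero, cosZeta_apply_zero]
  norm_num

lemma sign_helper {p : ℝ} (hp : 0 < p) (y : ℝ) : Real.sign (p * y) = Real.sign y := by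
  rcases lt_trichotomy y 0 with h|h|h
  · rw [Real.sign_of_neg h, Real.sign_of_neg (mul_neg_of_pos_of_neg hp h)]
  · simp [h]
  · rw [Real.sign_of_pos h, Real.sign_of_pos (mul_pos hp h)]

lemma Sl_prod {s : ℝ} (hs : s ≤ 0) {x : ℝ} (hx : x ∈ Ioo (0:ℝ) π) :
    ∃ P : ℝ, 0 < P ∧ Sl (s-1) x = P * Real.sin (π*s/2) := by
  have hπ : 0 < π := Real.pi_pos
  refine ⟨2 * (2*π) ^ (s-2) * Real.Gamma (2-s) * O (2-s) (x/(2*π)), ?_, ?_⟩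
  · have h1 : (0:ℝ) < (2*π) ^ (s-2) := Real.rpow_pos_of_pos (by positivity) _
    have h2 : 0 < Real.Gamma (2-s) := Real.Gamma_pos_of_pos (by linarith)
    have h3 : 0 < O (2-s) (x/(2*π)) := O_pos (mem_a hx) (by linarith)
    positivity
  · rw [Sl_eq hs hx]; ring

lemma hasDerivAt_Cl {s : ℝ} (hs : s ≤ 0) {x : ℝ} (hx : x ∈ Ioo (0:ℝ) π) :
    HasDerivAt (Cl s) (-(Sl (s-1) x)) x := by
  have hπ : 0 < π := Real.pi_pos
  rcases eq_or_lt_of_le hs with rfl | hs'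
  · rw [Sl_zero, neg_zero, Cl_zero]
    exact hasDerivAt_const x _
  · set a := x / (2*π) with ha_def
    have ha : a ∈ Ioo (0:ℝ) 1 := mem_a' hx
    have hσ : 1 < 1 - s := by linarith
    have hdiv : HasDerivAt (fun y : ℝ => y / (2*π)) (1/(2*π)) x := by
      simpa using (hasDerivAt_id x).div_const (2*π)
    have hE := (hasDerivAt_E hσ ha).comp x hdiv
    have hC := hE.const_mul (2 * (2*π) ^ (s-1) * Real.Gamma (1-s) * Real.sin (π*s/2))
    have heq : Cl s =ᶠ[nhds x] fun y =>
        2 * (2*π) ^ (s-1) * Real.Gamma (1-s) * Real.sin (π*s/2) * E (1-s) (y/(2*π)) := by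
      filter_upwards [isOpen_Ioo.mem_nhds hx] with y hy
      exact Cl_eq hs' hy
    have hD := hC.congr_of_eventuallyEq heq
    refine hD.congr_deriv ?_
    rw [Sl_eq hs hx]
    have hG : Real.Gamma (2-s) = (1-s) * Real.Gamma (1-s) := by
      rw [show (2-s : ℝ) = (1-s) + 1 by ring, Real.Gamma_add_one (by linarith : (1-s : ℝ) ≠ 0)]
    have hpow : (2*π : ℝ) ^ (s-2) = (2*π) ^ (s-1) / (2*π) := by
      rw [show (s-2 : ℝ) = (s-1) - 1 by ring, Real.rpow_sub (by positivity), Real.rpow_one]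
    rw [hG, hpow, show (1-s) + 1 = 2 - s by ring]
    field_simp
    ring


section MellinPart
open MeasureTheory Filter Asymptotics Topology


/-- the Abel-summed cosine series kernel -/
noncomputable def f (x t : ℝ) : ℝ :=
  Real.exp (-t) * (Real.cos x - Real.exp (-t)) /
    (1 - 2 * Real.exp (-t) * Real.cos x + Real.exp (-t) ^ 2)

noncomputable def F (x : ℝ) : ℝ → ℂ := fun t => ((f x t : ℝ) : ℂ)

lemma denom_pos {x : ℝ} (hsin : Real.sin x ≠ 0) (r : ℝ) :
    0 < 1 - 2 * r * Real.cos x + r ^ 2 := by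
  have h1 := Real.sin_sq_add_cos_sq x
  have h2 : 0 < Real.sin x ^ 2 := lt_of_le_of_ne (sq_nonneg _) (Ne.symm (pow_ne_zero 2 hsin))
  nlinarith [sq_nonneg (r - Real.cos x)]

lemma sin_den_le {x : ℝ} (r : ℝ) :
    Real.sin x ^ 2 ≤ 1 - 2 * r * Real.cos x + r ^ 2 := by
  have h1 := Real.sin_sq_add_cos_sq x
  nlinarith [sq_nonneg (r - Real.cos x)]

lemma hasSum_F {x : ℝ} (hsin : Real.sin x ≠ 0) {t : ℝ} (ht : t ∈ Ioi (0:ℝ)) :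
    HasSum (fun n : ℕ =>
      ((Real.cos (((n:ℝ)+1)*x) : ℝ) : ℂ) * ((Real.exp (-((n:ℝ)+1) * t) : ℝ) : ℂ)) (F x t) := by
  have ht' : (0:ℝ) < t := ht
  set r : ℝ := Real.exp (-t) with hr_def
  have hr0 : 0 < r := Real.exp_pos _
  have hr1 : r < 1 := Real.exp_lt_one_iff.mpr (by linarith)
  set z : ℂ := (r : ℂ) * Complex.exp ((x:ℝ) * Complex.I) with hz_def
  have hnorm : ‖z‖ < 1 := by
    rw [hz_def, norm_mul, Complex.norm_real, Real.norm_eq_abs,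
      Complex.norm_exp]
    simp only [Complex.mul_re, Complex.ofReal_re, Complex.I_re, Complex.ofReal_im, Complex.I_im,
      mul_zero, mul_one, zero_mul, sub_zero]
    rw [abs_of_pos hr0]
    simpa using hr1
  have hgeo := (hasSum_geometric_of_norm_lt_one hnorm).mul_left z
  -- terms
  have hterm : ∀ n : ℕ, z * z ^ n =
      ((Real.cos (((n:ℝ)+1)*x) : ℝ) : ℂ) * ((Real.exp (-((n:ℝ)+1) * t) : ℝ) : ℂ)
        + Complex.I * (((Real.sin (((n:ℝ)+1)*x) * Real.exp (-((n:ℝ)+1) * t) : ℝ) : ℂ)) := by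
    intro n
    have hzpow : z * z ^ n = ((r ^ (n+1) : ℝ) : ℂ) * Complex.exp ((((n:ℝ)+1) * x : ℝ) * Complex.I) := by
      rw [hz_def, ← pow_succ']
      rw [mul_pow, ← Complex.exp_nat_mul]
      push_cast
      ring_nf
    rw [hzpow, Complex.exp_mul_I]
    have hrp : (r ^ (n+1) : ℝ) = Real.exp (-((n:ℝ)+1) * t) := by
      rw [hr_def, ← Real.exp_nat_mul]
      congr 1
      push_cast
      ring
    rw [hrp, ← Complex.ofReal_cos, ← Complex.ofReal_sin]
    push_cast
    ring
  have hre := Complex.reCLM.hasSum hgeo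
  have hterm_re : ∀ n : ℕ, (z * z ^ n).re =
      Real.cos (((n:ℝ)+1)*x) * Real.exp (-((n:ℝ)+1) * t) := by
    intro n
    rw [hterm n]
    simp only [Complex.add_re, Complex.mul_re, Complex.ofReal_re, Complex.ofReal_im,
      Complex.I_re, Complex.I_im]
    ring
  have hzre : z.re = r * Real.cos x := by
    rw [hz_def, Complex.re_ofReal_mul, Complex.exp_ofReal_mul_I_re]
  have hzim : z.im = r * Real.sin x := by
    rw [hz_def, Complex.im_ofReal_mul, Complex.exp_ofReal_mul_I_im]
  have hsc := Real.sin_sq_add_cos_sq x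
  have hsum_re : (z * (1 - z)⁻¹).re = f x t := by
    rw [← div_eq_mul_inv, Complex.div_re, Complex.normSq_apply]
    have h1re : ((1:ℂ) - z).re = 1 - r * Real.cos x := by
      rw [Complex.sub_re, Complex.one_re, hzre]
    have h1im : ((1:ℂ) - z).im = -(r * Real.sin x) := by
      rw [Complex.sub_im, Complex.one_im, hzim]; ring
    rw [h1re, h1im, hzre, hzim, f]
    have hD : (1 - r * Real.cos x) * (1 - r * Real.cos x) + -(r * Real.sin x) * -(r * Real.sin x)
        = 1 - 2 * r * Real.cos x + r ^ 2 := by linear_combination (r^2) * hsc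
    rw [← add_div, hD]
    rw [show rexp (-t) = r from rfl]
    congr 1
    linear_combination (-(r^2)) * hsc
  have hfinal : HasSum (fun n : ℕ => Real.cos (((n:ℝ)+1)*x) * Real.exp (-((n:ℝ)+1) * t)) (f x t) := by
    have := hre
    simp only [Complex.reCLM_apply] at this
    rw [hsum_re] at this
    exact this.congr_fun fun n => (hterm_re n).symm
  have := Complex.hasSum_ofReal.mpr hfinal
  rw [F]
  refine this.congr_fun fun n => ?_
  push_cast
  ring

lemma contF {x : ℝ} (hsin : Real.sin x ≠ 0) : Continuous (F x) := by
  apply Complex.continuous_ofReal.comp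
  apply Continuous.div
  · fun_prop
  · fun_prop
  · intro t
    exact (denom_pos hsin _).ne'

lemma boundF {x : ℝ} (hsin : Real.sin x ≠ 0) {t : ℝ} (ht : 0 ≤ t) :
    ‖F x t‖ ≤ 2 / Real.sin x ^ 2 * Real.exp (-t) := by
  have h2 : 0 < Real.sin x ^ 2 := lt_of_le_of_ne (sq_nonneg _) (Ne.symm (pow_ne_zero 2 hsin))
  have hr0 : 0 < Real.exp (-t) := Real.exp_pos _
  have hr1 : Real.exp (-t) ≤ 1 := Real.exp_le_one_iff.mpr (by linarith)
  have hD := denom_pos hsin (Real.exp (-t))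
  have hDge := sin_den_le (x := x) (Real.exp (-t))
  rw [F, Complex.norm_real, Real.norm_eq_abs, f, abs_div]
  have hnum : |Real.exp (-t) * (Real.cos x - Real.exp (-t))| ≤ Real.exp (-t) * 2 := by
    rw [abs_mul, abs_of_pos hr0]
    have := Real.neg_one_le_cos x
    have := Real.cos_le_one x
    have : |Real.cos x - Real.exp (-t)| ≤ 2 := abs_le.mpr ⟨by linarith, by linarith⟩
    nlinarith
  have hden : |1 - 2 * Real.exp (-t) * Real.cos x + Real.exp (-t) ^ 2|
      = 1 - 2 * Real.exp (-t) * Real.cos x + Real.exp (-t) ^ 2 := abs_of_pos hD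
  rw [hden]
  calc |Real.exp (-t) * (Real.cos x - Real.exp (-t))| /
        (1 - 2 * Real.exp (-t) * Real.cos x + Real.exp (-t) ^ 2)
      ≤ (Real.exp (-t) * 2) / Real.sin x ^ 2 := by
        apply div_le_div₀ (by positivity) hnum h2 hDge
    _ = 2 / Real.sin x ^ 2 * Real.exp (-t) := by ring


lemma sin_ne {x : ℝ} (hx : x ∈ Ioo (0:ℝ) π) : Real.sin x ≠ 0 :=
  (Real.sin_pos_of_pos_of_lt_pi hx.1 hx.2).ne'

lemma F_bigO_top {x : ℝ} (hsin : Real.sin x ≠ 0) :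
    F x =O[atTop] fun t => Real.exp (-1 * t) := by
  rw [Asymptotics.isBigO_iff]
  refine ⟨2 / Real.sin x ^ 2, ?_⟩
  filter_upwards [eventually_ge_atTop (0:ℝ)] with t ht
  rw [Real.norm_eq_abs, show (-1:ℝ)*t = -t by ring, Real.abs_exp]
  exact boundF hsin ht

lemma F_bigO_bot {x : ℝ} (hsin : Real.sin x ≠ 0) :
    F x =O[nhdsWithin (0:ℝ) (Ioi 0)] fun t => t ^ (-(0:ℝ)) := by
  rw [Asymptotics.isBigO_iff]
  refine ⟨2 / Real.sin x ^ 2, ?_⟩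
  filter_upwards [self_mem_nhdsWithin] with t (ht : (0:ℝ) < t)
  have h2 : 0 < Real.sin x ^ 2 := lt_of_le_of_ne (sq_nonneg _) (Ne.symm (pow_ne_zero 2 hsin))
  have hb := boundF hsin ht.le
  have he : Real.exp (-t) ≤ 1 := Real.exp_le_one_iff.mpr (by linarith)
  have hc' : (0:ℝ) ≤ 2 / Real.sin x ^ 2 := by positivity
  have hmul := mul_le_of_le_one_right hc' he
  have : ‖F x t‖ ≤ 2 / Real.sin x ^ 2 := le_trans hb hmul
  rw [neg_zero, Real.rpow_zero]
  simpa using this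

lemma F_locInt {x : ℝ} (hsin : Real.sin x ≠ 0) : LocallyIntegrableOn (F x) (Ioi 0) :=
  ((contF hsin).locallyIntegrable).locallyIntegrableOn _

lemma mellin_eq {x : ℝ} (hx : x ∈ Ioo (0:ℝ) π) {s : ℂ} (hs : 1 < s.re) :
    mellin (F x) s = Complex.Gamma s * cosZeta (↑(x/(2*π)) : UnitAddCircle) s := by
  have hsin : Real.sin x ≠ 0 := sin_ne hx
  have hs0 : 0 < s.re := by linarith
  have hsum : Summable fun n : ℕ =>
      ‖((Real.cos (((n:ℝ)+1)*x) : ℝ) : ℂ)‖ / ((n:ℝ)+1) ^ s.re := by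
    refine Summable.of_nonneg_of_le (fun n => by positivity) (fun n => ?_)
      (summable_shift one_pos hs)
    have hp : (0:ℝ) < ((n:ℝ)+1) ^ s.re := Real.rpow_pos_of_pos (by positivity) _
    have hc : ‖((Real.cos (((n:ℝ)+1)*x) : ℝ) : ℂ)‖ ≤ 1 := by
      rw [Complex.norm_real, Real.norm_eq_abs]
      exact Real.abs_cos_le_one _
    rw [Real.rpow_neg (by positivity : (0:ℝ) ≤ (n:ℝ)+1), ← one_div]
    exact div_le_div₀ zero_le_one hc hp le_rfl
  have h1 := hasSum_mellin (F := F x) (a := fun n : ℕ => ((Real.cos (((n:ℝ)+1)*x) : ℝ) : ℂ))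
    (p := fun n : ℕ => ((n:ℝ)+1)) (fun n => Or.inr (by positivity)) hs0
    (fun t ht => hasSum_F hsin ht) hsum
  have hζ := hasSum_nat_cosZeta (x/(2*π)) hs
  have hzero : ((Real.cos (2*π*(x/(2*π))*((0:ℕ):ℝ)) : ℝ) : ℂ) / ((0:ℕ) : ℂ) ^ s = 0 := by
    rw [show ((0:ℕ) : ℂ) = 0 from Nat.cast_zero, zero_cpow (ne_zero_of_one_lt_re hs), div_zero]
  have hshift := (hasSum_nat_add_iff' 1).mpr hζ
  rw [Finset.sum_range_one, hzero, sub_zero] at hshift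
  have h2 := hshift.mul_left (Complex.Gamma s)
  refine h1.unique (h2.congr_fun fun n => ?_)
  have hπ : (0:ℝ) < π := Real.pi_pos
  have hang : 2*π*(x/(2*π))*(((n+1:ℕ)):ℝ) = ((n:ℝ)+1)*x := by
    field_simp
    push_cast; ring
  beta_reduce
  rw [← hang]
  push_cast
  ring

lemma a_ne_zero {x : ℝ} (hx : x ∈ Ioo (0:ℝ) π) : ((x/(2*π) : ℝ) : UnitAddCircle) ≠ 0 := by
  have ha := mem_a hx
  rw [Ne, AddCircle.coe_eq_zero_iff]
  rintro ⟨n, hn⟩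
  rw [zsmul_eq_mul, mul_one] at hn
  rcases le_or_gt n 0 with h | h
  · have : (n:ℝ) ≤ 0 := by exact_mod_cast h
    rw [hn] at this
    linarith [ha.1]
  · have : (1:ℝ) ≤ (n:ℝ) := by exact_mod_cast h
    rw [hn] at this
    linarith [ha.2]

lemma mellin_eq_on_pos {x : ℝ} (hx : x ∈ Ioo (0:ℝ) π) {s : ℂ} (hs : 0 < s.re) :
    mellin (F x) s = Complex.Gamma s * cosZeta (↑(x/(2*π)) : UnitAddCircle) s := by
  have hsin : Real.sin x ≠ 0 := sin_ne hx
  have hUo : IsOpen {s : ℂ | 0 < s.re} := isOpen_lt continuous_const Complex.continuous_re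
  have hM : AnalyticOnNhd ℂ (mellin (F x)) {s : ℂ | 0 < s.re} := by
    refine DifferentiableOn.analyticOnNhd (fun w hw => ?_) hUo
    exact (mellin_differentiableAt_of_isBigO_rpow_exp one_pos (F_locInt hsin)
      (F_bigO_top hsin) (F_bigO_bot hsin) hw).differentiableWithinAt
  have hG : AnalyticOnNhd ℂ (fun s => Complex.Gamma s * cosZeta (↑(x/(2*π)) : UnitAddCircle) s)
      {s : ℂ | 0 < s.re} := by
    refine DifferentiableOn.analyticOnNhd (fun w hw => ?_) hUo
    refine ((Complex.differentiableAt_Gamma w fun m => ?_).mul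
      (differentiableAt_cosZeta _ (Or.inr (a_ne_zero hx)))).differentiableWithinAt
    intro hm
    rw [hm] at hw
    simp only [mem_setOf_eq, Complex.neg_re, Complex.natCast_re] at hw
    have : (0:ℝ) ≤ (m:ℝ) := Nat.cast_nonneg m
    linarith
  have h2U : (2:ℂ) ∈ {s : ℂ | 0 < s.re} := by norm_num [mem_setOf_eq]
  have hev : mellin (F x) =ᶠ[nhds (2:ℂ)]
      fun s => Complex.Gamma s * cosZeta (↑(x/(2*π)) : UnitAddCircle) s := by
    have hopen : IsOpen {s : ℂ | 1 < s.re} := isOpen_lt continuous_const Complex.continuous_re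
    filter_upwards [hopen.mem_nhds (by norm_num [mem_setOf_eq])] with w hw
    exact mellin_eq hx hw
  exact hM.eqOn_of_preconnected_of_eventuallyEq hG
    (convex_halfSpace_re_gt 0).isPreconnected h2U hev hs

lemma Cl_integral {s : ℝ} (hs : 0 < s) {x : ℝ} (hx : x ∈ Ioo (0:ℝ) π) :
    Cl s x = (∫ t in Ioi (0:ℝ), t ^ (s-1) * f x t) / Real.Gamma s := by
  have hkey := mellin_eq_on_pos hx (s := (s:ℂ)) (by simpa using hs)
  have hre : mellin (F x) (s:ℂ) = ((∫ t in Ioi (0:ℝ), t ^ (s-1) * f x t : ℝ) : ℂ) := by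
    rw [mellin]
    refine (setIntegral_congr_fun measurableSet_Ioi fun t ht => ?_).trans integral_ofReal
    have hcast : ((t:ℂ)) ^ ((s:ℂ) - 1) = ((t ^ (s-1) : ℝ) : ℂ) := by
      rw [show ((s:ℂ) - 1) = (((s - 1 : ℝ)) : ℂ) by push_cast; ring]
      exact (Complex.ofReal_cpow (le_of_lt ht) _).symm
    rw [smul_eq_mul, hcast, F]
    norm_cast
  have hΓpos : 0 < Real.Gamma s := Real.Gamma_pos_of_pos hs
  have hΓ : Complex.Gamma (s:ℂ) = ((Real.Gamma s : ℝ) : ℂ) := Complex.Gamma_ofReal s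
  rw [hre, hΓ] at hkey
  have hc : cosZeta (↑(x/(2*π)) : UnitAddCircle) (s:ℂ)
      = (((∫ t in Ioi (0:ℝ), t ^ (s-1) * f x t) / Real.Gamma s : ℝ) : ℂ) := by
    rw [Complex.ofReal_div, eq_div_iff (Complex.ofReal_ne_zero.mpr hΓpos.ne'), mul_comm]
    exact hkey.symm
  rw [Cl, hc, Complex.ofReal_re]

lemma f_lt {t : ℝ} (ht : 0 < t) {x₁ x₂ : ℝ} (hx₁ : x₁ ∈ Ioo (0:ℝ) π)
    (hx₂ : x₂ ∈ Ioo (0:ℝ) π) (hlt : x₁ < x₂) : f x₂ t < f x₁ t := by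
  have hc : Real.cos x₂ < Real.cos x₁ :=
    Real.strictAntiOn_cos ⟨hx₁.1.le, hx₁.2.le⟩ ⟨hx₂.1.le, hx₂.2.le⟩ hlt
  have hr0 : 0 < Real.exp (-t) := Real.exp_pos _
  have hr1 : Real.exp (-t) < 1 := Real.exp_lt_one_iff.mpr (by linarith)
  have hD1 := denom_pos (sin_ne hx₁) (Real.exp (-t))
  have hD2 := denom_pos (sin_ne hx₂) (Real.exp (-t))
  rw [f, f, div_lt_div_iff₀ hD2 hD1]
  nlinarith [mul_pos (mul_pos hr0 (show (0:ℝ) < 1 - Real.exp (-t)^2 by nlinarith))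
    (sub_pos.2 hc)]

lemma integrable_g {s : ℝ} (hs : 0 < s) {x : ℝ} (hx : x ∈ Ioo (0:ℝ) π) :
    IntegrableOn (fun t => t ^ (s-1) * f x t) (Ioi (0:ℝ)) := by
  have hsin : Real.sin x ≠ 0 := sin_ne hx
  have hMC : MellinConvergent (F x) (s:ℂ) :=
    mellinConvergent_of_isBigO_rpow_exp one_pos (F_locInt hsin) (F_bigO_top hsin)
      (F_bigO_bot hsin) (by simpa using hs)
  have hre := hMC.re
  refine hre.congr ?_
  rw [Filter.EventuallyEq, ae_restrict_iff' measurableSet_Ioi]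
  filter_upwards with t ht
  have hcast : ((t:ℂ)) ^ ((s:ℂ) - 1) = ((t ^ (s-1) : ℝ) : ℂ) := by
    rw [show ((s:ℂ) - 1) = (((s - 1 : ℝ)) : ℂ) by push_cast; ring]
    exact (Complex.ofReal_cpow (le_of_lt ht) _).symm
  rw [smul_eq_mul, hcast, F]
  push_cast
  simp

lemma part1 {s : ℝ} (hs : 0 < s) : StrictAntiOn (Cl s) (Set.Ioo 0 π) := by
  intro x₁ hx₁ x₂ hx₂ hlt
  rw [Cl_integral hs hx₁, Cl_integral hs hx₂]
  have hΓpos : 0 < Real.Gamma s := Real.Gamma_pos_of_pos hs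
  rw [div_lt_div_iff_of_pos_right hΓpos]
  have hI1 := integrable_g hs hx₁
  have hI2 := integrable_g hs hx₂
  have hI : IntegrableOn (fun t => t ^ (s-1) * f x₁ t - t ^ (s-1) * f x₂ t) (Ioi (0:ℝ)) :=
    hI1.sub hI2
  have hpos : 0 < ∫ t in Ioi (0:ℝ), (t ^ (s-1) * f x₁ t - t ^ (s-1) * f x₂ t) := by
    rw [setIntegral_pos_iff_support_of_nonneg_ae ?_ hI]
    · refine lt_of_lt_of_le (b := volume (Ioi (0:ℝ)))
        (show (0:ENNReal) < volume (Ioi (0:ℝ)) by simp [Real.volume_Ioi]) (measure_mono ?_)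
      intro t ht
      refine ⟨?_, ht⟩
      have hf := f_lt ht hx₁ hx₂ hlt
      have hp : (0:ℝ) < t ^ (s-1) := Real.rpow_pos_of_pos ht _
      simp only [Function.mem_support]
      nlinarith
    · rw [Filter.EventuallyLE, ae_restrict_iff' measurableSet_Ioi]
      filter_upwards with t ht
      have hf := f_lt ht hx₁ hx₂ hlt
      have hp : (0:ℝ) < t ^ (s-1) := Real.rpow_pos_of_pos ht _
      simp only [Pi.zero_apply]
      nlinarith
  have := integral_sub hI1 hI2
  rw [this] at hpos
  linarith

end MellinPart

lemma contOn {s : ℝ} (hs : s ≤ 0) : ContinuousOn (Cl s) (Set.Ioo 0 π) :=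
  fun y hy => (hasDerivAt_Cl hs hy).continuousAt.continuousWithinAt

lemma deriv_Cl {s : ℝ} (hs : s ≤ 0) {x : ℝ} (hx : x ∈ Ioo (0:ℝ) π) :
    deriv (Cl s) x = -(Sl (s-1) x) := (hasDerivAt_Cl hs hx).deriv

end ClausenAux

/-- Monotonicity of `C_s` in `x` on `(0, π)`: strictly decreasing for `s > 0`; for `s ≤ 0`
the derivative `-S_{s-1}(x)` has the same sign as `-sin(πs/2)`, so `C_s` is decreasing when
`sin(πs/2) > 0`, increasing when `sin(πs/2) < 0`, and constant when `sin(πs/2) = 0`. -/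
theorem clausenC_monotone (s : ℝ) :
    (0 < s → StrictAntiOn (Cl s) (Set.Ioo 0 π)) ∧
    (s ≤ 0 → ∀ x ∈ Set.Ioo (0 : ℝ) π,
      HasDerivAt (Cl s) (-(Sl (s - 1) x)) x ∧
      Real.sign (-(Sl (s - 1) x)) = Real.sign (-(Real.sin (π * s / 2)))) ∧
    (s ≤ 0 → 0 < Real.sin (π * s / 2) → StrictAntiOn (Cl s) (Set.Ioo 0 π)) ∧
    (s ≤ 0 → Real.sin (π * s / 2) < 0 → StrictMonoOn (Cl s) (Set.Ioo 0 π)) ∧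
    (s ≤ 0 → Real.sin (π * s / 2) = 0 →
      ∀ x ∈ Set.Ioo (0 : ℝ) π, ∀ y ∈ Set.Ioo (0 : ℝ) π, Cl s x = Cl s y) := by
  refine ⟨fun hs => ClausenAux.part1 hs, fun hs x hx => ?_, fun hs hsin => ?_, fun hs hsin => ?_,
    fun hs hsin => ?_⟩
  · refine ⟨ClausenAux.hasDerivAt_Cl hs hx, ?_⟩
    obtain ⟨P, hP, hSl⟩ := ClausenAux.Sl_prod hs hx
    rw [hSl, show -(P * Real.sin (π*s/2)) = P * (-(Real.sin (π*s/2))) by ring,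
      ClausenAux.sign_helper hP]
  · refine strictAntiOn_of_deriv_neg (convex_Ioo _ _) (ClausenAux.contOn hs) fun x hx => ?_
    rw [interior_Ioo] at hx
    obtain ⟨P, hP, hSl⟩ := ClausenAux.Sl_prod hs hx
    rw [ClausenAux.deriv_Cl hs hx, hSl]
    nlinarith
  · refine strictMonoOn_of_deriv_pos (convex_Ioo _ _) (ClausenAux.contOn hs) fun x hx => ?_
    rw [interior_Ioo] at hx
    obtain ⟨P, hP, hSl⟩ := ClausenAux.Sl_prod hs hx
    rw [ClausenAux.deriv_Cl hs hx, hSl]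
    nlinarith
  · have hmono : MonotoneOn (Cl s) (Set.Ioo 0 π) := by
      refine monotoneOn_of_deriv_nonneg (convex_Ioo _ _) (ClausenAux.contOn hs) ?_ fun x hx => ?_
      · intro x hx
        rw [interior_Ioo] at hx
        exact (ClausenAux.hasDerivAt_Cl hs hx).differentiableAt.differentiableWithinAt
      · rw [interior_Ioo] at hx
        obtain ⟨P, hP, hSl⟩ := ClausenAux.Sl_prod hs hx
        rw [ClausenAux.deriv_Cl hs hx, hSl, hsin]
        simp
    have hanti : AntitoneOn (Cl s) (Set.Ioo 0 π) := by
      refine antitoneOn_of_deriv_nonpos (convex_Ioo _ _) (ClausenAux.contOn hs) ?_ fun x hx => ?_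
      · intro x hx
        rw [interior_Ioo] at hx
        exact (ClausenAux.hasDerivAt_Cl hs hx).differentiableAt.differentiableWithinAt
      · rw [interior_Ioo] at hx
        obtain ⟨P, hP, hSl⟩ := ClausenAux.Sl_prod hs hx
        rw [ClausenAux.deriv_Cl hs hx, hSl, hsin]
        simp
    intro x hx y hy
    rcases le_total x y with h | h
    · exact le_antisymm (hmono hx hy h) (hanti hx hy h)
    · exact (le_antisymm (hmono hy hx h) (hanti hy hx h)).symm
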